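/- arXiv:2310.00176 — 2 statements merged into one kernel-verified Lean document; each statement's English description precedes it below -/
import Mathlib

section
/- For every vector v ∈ ℝ^p and every ε > 0, the restricted dual norm ‖v‖_{2,ε} := max{⟨θ, v⟩ : ‖θ‖₂ ≤ 1, ‖θ‖_∞ ≤ ε} satisfies ‖v‖_{2,ε} ≥ ‖v‖₂ · ( ‖v‖₁/(√p · ‖v‖₂) − 1/(√p · ε) )₊², where x₊ denotes max(x,0) (and the bound is interpreted as 0 when v = 0). -/
/-- Restricted dual norm lower bound:
`‖v‖_{2,ε} ≥ ‖v‖₂ · (‖v‖₁/(√p ‖v‖₂) − 1/(√p ε))₊²`. -/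
theorem stmt_0 (p : ℕ) (hp : 1 ≤ p) (v : Fin p → ℝ) (ε : ℝ) (hε : 0 < ε) :
    Real.sqrt (∑ i, (v i) ^ 2) *
      (max ((∑ i, |v i|) / (Real.sqrt p * Real.sqrt (∑ i, (v i) ^ 2)) -
        1 / (Real.sqrt p * ε)) 0) ^ 2 ≤
    sSup {x : ℝ | ∃ θ : Fin p → ℝ, Real.sqrt (∑ i, (θ i) ^ 2) ≤ 1 ∧
      (∀ i, |θ i| ≤ ε) ∧ x = ∑ i, θ i * v i} := by
  set N := Real.sqrt (∑ i, (v i) ^ 2) with hNdef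
  set S := ∑ i, |v i| with hSdef
  have hN0 : 0 ≤ N := Real.sqrt_nonneg _
  have hS0 : 0 ≤ S := Finset.sum_nonneg fun i _ => abs_nonneg _
  have hppos : (0:ℝ) < p := by exact_mod_cast hp
  have hsp : (0:ℝ) < Real.sqrt p := Real.sqrt_pos.2 hppos
  -- Cauchy-Schwarz : S ≤ √p * N
  have hCS : S ≤ Real.sqrt p * N := by
    have h := Real.sum_mul_le_sqrt_mul_sqrt Finset.univ (fun i => |v i|) (fun _ => (1:ℝ))
    simp only [mul_one, one_pow, sq_abs] at h
    calc S ≤ Real.sqrt (∑ i : Fin p, (v i) ^ 2) * Real.sqrt (∑ _i : Fin p, (1:ℝ)) := h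
      _ = Real.sqrt p * N := by
          rw [Finset.sum_const, Finset.card_univ, Fintype.card_fin, nsmul_eq_mul, mul_one,
            mul_comm]
  -- the candidate θ
  set c : ℝ := min ε (1 / Real.sqrt p) with hcdef
  have hc0 : 0 < c := lt_min hε (by positivity)
  have hcsp : c ≤ 1 / Real.sqrt p := min_le_right _ _
  set θ : Fin p → ℝ := fun i => c * (if 0 ≤ v i then 1 else -1) with hθdef
  have hθv : ∀ i, θ i * v i = c * |v i| := by
    intro i
    by_cases h : 0 ≤ v i
    · simp [hθdef, h, abs_of_nonneg h]
    · simp only [hθdef, h, if_false]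
      rw [abs_of_neg (lt_of_not_ge h)]; ring
  have hmem : c * S ∈ {x : ℝ | ∃ θ : Fin p → ℝ, Real.sqrt (∑ i, (θ i) ^ 2) ≤ 1 ∧
      (∀ i, |θ i| ≤ ε) ∧ x = ∑ i, θ i * v i} := by
    refine ⟨θ, ?_, ?_, ?_⟩
    · have hsum : (∑ i : Fin p, (θ i) ^ 2) ≤ 1 := by
        have : ∀ i : Fin p, (θ i) ^ 2 = c ^ 2 := by
          intro i; by_cases h : 0 ≤ v i <;> simp [hθdef, h] <;> ring
        simp only [this, Finset.sum_const, Finset.card_univ, Fintype.card_fin, nsmul_eq_mul]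
        have hc2 : c ^ 2 ≤ (1 / Real.sqrt p) ^ 2 := by
          apply pow_le_pow_left₀ hc0.le hcsp
        have : (1 / Real.sqrt p) ^ 2 = 1 / p := by
          rw [div_pow, one_pow, Real.sq_sqrt hppos.le]
        rw [this] at hc2
        calc (p:ℝ) * c ^ 2 ≤ (p:ℝ) * (1/p) := by
              exact mul_le_mul_of_nonneg_left hc2 hppos.le
          _ = 1 := by field_simp
      calc Real.sqrt (∑ i : Fin p, (θ i) ^ 2) ≤ Real.sqrt 1 := Real.sqrt_le_sqrt hsum
        _ = 1 := Real.sqrt_one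
    · intro i
      have : |θ i| = c := by
        by_cases h : 0 ≤ v i <;> simp [hθdef, h, abs_of_pos hc0]
      rw [this]; exact min_le_left _ _
    · rw [Finset.mul_sum]
      exact (Finset.sum_congr rfl fun i _ => hθv i).symm
  -- boundedness
  have hbdd : BddAbove {x : ℝ | ∃ θ : Fin p → ℝ, Real.sqrt (∑ i, (θ i) ^ 2) ≤ 1 ∧
      (∀ i, |θ i| ≤ ε) ∧ x = ∑ i, θ i * v i} := by
    refine ⟨N, ?_⟩
    rintro x ⟨φ, hφ1, _, rfl⟩
    calc (∑ i, φ i * v i) ≤ Real.sqrt (∑ i, (φ i)^2) * Real.sqrt (∑ i, (v i)^2) :=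
          Real.sum_mul_le_sqrt_mul_sqrt _ _ _
      _ ≤ 1 * N := mul_le_mul_of_nonneg_right hφ1 hN0
      _ = N := one_mul N
  have hle : c * S ≤ sSup {x : ℝ | ∃ θ : Fin p → ℝ, Real.sqrt (∑ i, (θ i) ^ 2) ≤ 1 ∧
      (∀ i, |θ i| ≤ ε) ∧ x = ∑ i, θ i * v i} := le_csSup hbdd hmem
  refine le_trans ?_ hle
  -- algebra : N * (max (S/(√p N) - 1/(√p ε)) 0)^2 ≤ c * S
  rcases le_or_gt (S / (Real.sqrt p * N)) (1 / (Real.sqrt p * ε)) with h | h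
  · rw [max_eq_right (by linarith)]
    simpa using mul_nonneg hc0.le hS0
  · -- strict case: N > 0
    have hNpos : 0 < N := by
      by_contra hN
      push_neg at hN
      have : N = 0 := le_antisymm hN hN0
      rw [this, mul_zero, div_zero] at h
      have : 0 < 1 / (Real.sqrt p * ε) := by positivity
      linarith
    set a := S / (Real.sqrt p * N) with hadef
    set b := 1 / (Real.sqrt p * ε) with hbdef
    have hb0 : 0 < b := by positivity
    have ha1 : a ≤ 1 := by
      rw [hadef, div_le_one (by positivity)]
      exact hCS
    have hb1 : b < 1 := lt_of_lt_of_le h ha1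
    -- b < 1 means √p ε > 1, hence 1/√p ≤ ε, hence c = 1/√p
    have hεsp : 1 / Real.sqrt p ≤ ε := by
      rw [hbdef, div_lt_one (by positivity)] at hb1
      rw [div_le_iff₀ hsp]
      linarith [mul_comm ε (Real.sqrt p)]
    have hc : c = 1 / Real.sqrt p := min_eq_right hεsp
    rw [max_eq_left (by linarith)]
    have hcS : c * S = a * N := by
      rw [hc, hadef]
      field_simp
    rw [hcS]
    have key : (a - b) ^ 2 ≤ a := by
      nlinarith [sq_nonneg (a - b)]
    calc N * (a - b) ^ 2 ≤ N * a := mul_le_mul_of_nonneg_left key hN0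
      _ = a * N := mul_comm _ _
end

section
/- Let C ⊆ ℝ^p, λ > 0, and let L, L¹ : ℝ^p → ℝ with L(θ) = L¹(θ) + (1/n)h(u₁(θ)) where h : ℝ → [0,∞) satisfies h(t) ≤ t² for all t, u₁ : ℝ^p → [0,∞) is ‖x₁‖₂-Lipschitz (x₁ ∈ ℝ^p fixed), and L¹ is (λ)-strongly convex on the convex set C. Let θ̂ minimize L over C and θ̂¹ minimize L¹ over C. Then ‖θ̂ − θ̂¹‖₂ ≤ √(2/(λn)) · u₁(θ̂¹), and consequently 0 ≤ u₁(θ̂) ≤ (1 + √(2/(λn))·‖x₁‖₂) · u₁(θ̂¹). -/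
/-- Leave-one-out decoupling: if `L(θ) = L¹(θ) + (1/n)h(u₁(θ))` with `0 ≤ h(t) ≤ t²`,
`u₁ ≥ 0` being `‖x₁‖`-Lipschitz, and `L¹` is `λ`-strongly convex on the convex set `C`,
then the minimizers `θ̂` of `L` and `θ̂¹` of `L¹` over `C` satisfy
`‖θ̂ − θ̂¹‖ ≤ √(2/(λn))·u₁(θ̂¹)` and `0 ≤ u₁(θ̂) ≤ (1 + √(2/(λn))‖x₁‖)·u₁(θ̂¹)`. -/
theorem stmt_18 (p n : ℕ) (hn : 0 < n)
    (C : Set (EuclideanSpace ℝ (Fin p))) (hC : Convex ℝ C)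
    (lam : ℝ) (hlam : 0 < lam)
    (h : ℝ → ℝ) (hh0 : ∀ t, 0 ≤ h t) (hht : ∀ t, h t ≤ t ^ 2)
    (x₁ : EuclideanSpace ℝ (Fin p))
    (u₁ : EuclideanSpace ℝ (Fin p) → ℝ) (hu₁0 : ∀ θ, 0 ≤ u₁ θ)
    (hu₁lip : ∀ a b, |u₁ a - u₁ b| ≤ ‖x₁‖ * ‖a - b‖)
    (L L1 : EuclideanSpace ℝ (Fin p) → ℝ)
    (hL : ∀ θ, L θ = L1 θ + (1 / (n : ℝ)) * h (u₁ θ))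
    (hsc : ∀ a ∈ C, ∀ b ∈ C, ∀ s t : ℝ, 0 ≤ s → 0 ≤ t → s + t = 1 →
      L1 (s • a + t • b) ≤ s * L1 a + t * L1 b - (lam / 2) * s * t * ‖a - b‖ ^ 2)
    (θhat θhat1 : EuclideanSpace ℝ (Fin p))
    (hθhat : θhat ∈ C ∧ ∀ θ ∈ C, L θhat ≤ L θ)
    (hθhat1 : θhat1 ∈ C ∧ ∀ θ ∈ C, L1 θhat1 ≤ L1 θ) :
    ‖θhat - θhat1‖ ≤ Real.sqrt (2 / (lam * n)) * u₁ θhat1 ∧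
    0 ≤ u₁ θhat ∧
    u₁ θhat ≤ (1 + Real.sqrt (2 / (lam * n)) * ‖x₁‖) * u₁ θhat1 := by

  obtain ⟨hmem, hmin⟩ := hθhat
  obtain ⟨hmem1, hmin1⟩ := hθhat1
  have hnpos : (0:ℝ) < n := by exact_mod_cast hn
  set d := ‖θhat - θhat1‖ with hd
  have key : ∀ t ∈ Set.Ioo (0:ℝ) 1, (lam/2)*(1-t)*d^2 ≤ L1 θhat - L1 θhat1 := by
    intro t ht
    have h1 := hsc θhat hmem θhat1 hmem1 t (1-t) ht.1.le (by linarith [ht.2]) (by ring)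
    have hcomb : t • θhat + (1-t) • θhat1 ∈ C :=
      hC hmem hmem1 ht.1.le (by linarith [ht.2]) (by ring)
    have h2 := hmin1 _ hcomb
    have ht0 := ht.1
    nlinarith [sq_nonneg d]
  have hsc2 : (lam/2)*d^2 ≤ L1 θhat - L1 θhat1 := by
    haveI : (nhdsWithin (0:ℝ) (Set.Ioo 0 1)).NeBot :=
      left_nhdsWithin_Ioo_neBot (by norm_num)
    have htend : Filter.Tendsto (fun t : ℝ => (lam/2)*(1-t)*d^2)
        (nhdsWithin 0 (Set.Ioo 0 1)) (nhds ((lam/2)*d^2)) := by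
      have hc : Filter.Tendsto (fun t : ℝ => (lam/2)*(1-t)*d^2) (nhds 0)
          (nhds ((lam/2)*(1-0)*d^2)) := by
        exact ((continuous_const.mul (continuous_const.sub continuous_id)).mul continuous_const).tendsto 0
      simpa using hc.mono_left nhdsWithin_le_nhds
    refine le_of_tendsto htend ?_
    filter_upwards [self_mem_nhdsWithin] with t ht using key t ht
  have hL1le : L1 θhat ≤ L1 θhat1 + (1/n) * (u₁ θhat1)^2 := by
    have hm := hmin θhat1 hmem1
    rw [hL θhat, hL θhat1] at hm
    have h3 : (0:ℝ) ≤ (1/n) * h (u₁ θhat) := mul_nonneg (by positivity) (hh0 _)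
    have h4 : h (u₁ θhat1) ≤ (u₁ θhat1)^2 := hht _
    have h5 : (1/n:ℝ) * h (u₁ θhat1) ≤ (1/n) * (u₁ θhat1)^2 := by
      apply mul_le_mul_of_nonneg_left h4 (by positivity)
    linarith
  have hdsq : d^2 ≤ (2/(lam*n)) * (u₁ θhat1)^2 := by
    have h6 : lam/2*d^2*n ≤ (u₁ θhat1)^2 := by
      have h7 := mul_le_mul_of_nonneg_right
        (show lam/2*d^2 ≤ 1/(n:ℝ)*(u₁ θhat1)^2 from by linarith) hnpos.le
      calc lam/2*d^2*n ≤ 1/(n:ℝ)*(u₁ θhat1)^2*n := h7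
        _ = (u₁ θhat1)^2 := by field_simp
    rw [div_mul_eq_mul_div, le_div_iff₀ (by positivity)]
    nlinarith [h6]
  have h1 : d ≤ Real.sqrt (2/(lam*n)) * u₁ θhat1 := by
    have hs := Real.sqrt_le_sqrt hdsq
    rwa [Real.sqrt_sq (norm_nonneg _), Real.sqrt_mul (by positivity),
      Real.sqrt_sq (hu₁0 _)] at hs
  refine ⟨h1, hu₁0 _, ?_⟩
  have h2 : u₁ θhat - u₁ θhat1 ≤ ‖x₁‖ * d := le_trans (le_abs_self _) (hu₁lip _ _)
  have h3 : ‖x₁‖ * d ≤ ‖x₁‖ * (Real.sqrt (2/(lam*n)) * u₁ θhat1) :=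
    mul_le_mul_of_nonneg_left h1 (norm_nonneg _)
  nlinarith
end
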